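/- Let w ∈ ℕ, n₁, n₂ ∈ ℕ with n₁·w ≤ n₂, and let A ∈ F₂^{n₁×n₂} be a matrix whose non-zero row vectors all have Hamming weight exactly w and whose column vectors all have Hamming weight at most 1. Let e ∈ F₂^{n₂} be a random vector such that its support is a local stochastic set of parameter p. Then the support of Ae ∈ F₂^{n₁} is a local stochastic set of parameter 4·p^{1/w}. More precisely, one can write Ae = g^{(1)} + ... + g^{(w)} where each g^{(k)} has support that is a local stochastic set of parameter p, and the support of the sum is a local stochastic set of parameter 4·p^{2^{−⌈log₂ w⌉}} ≤ 4·p^{1/w}. -/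

import Mathlib

open MeasureTheory

/-- A random subset `S` of `α` is a local stochastic set of parameter `p`. -/
def LocalStochastic {Ω α : Type*} [MeasurableSpace Ω]
    (μ : Measure Ω) (S : Ω → Finset α) (p : ℝ) : Prop :=
  ∀ F : Finset α, μ {ω | F ⊆ S ω} ≤ ENNReal.ofReal (p ^ F.card)

open scoped ENNReal

lemma aux_ineq (w : ℕ) (hw : 1 ≤ w) (p β : ℝ) (hp0 : 0 ≤ p) (hp1 : p ≤ 1)
    (hβ0 : 0 < β) (hβ : β ≤ 1 / w) (h4 : 4 * p ^ β < 1) :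
    (w : ℝ) * p ≤ 4 * p ^ β := by
  rcases eq_or_lt_of_le hp0 with h0 | h0
  · simp [← h0, Real.zero_rpow hβ0.ne']
  have hw0 : (0:ℝ) < w := by exact_mod_cast hw
  have h1β : (w:ℝ) ≤ 1 / β := by
    rw [le_div_iff₀ hβ0]
    calc (w:ℝ) * β ≤ w * (1/w) := by nlinarith
    _ = 1 := by field_simp
  have hpβ : p ^ β < 1/4 := by linarith
  have hp14 : p ≤ (1/4 : ℝ) ^ (w:ℝ) := by
    have h1 : p = (p ^ β) ^ (1/β) := by
      rw [← Real.rpow_mul hp0]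
      rw [show β * (1/β) = 1 by field_simp, Real.rpow_one]
    have h2 : (p ^ β) ^ (1/β) ≤ ((1/4:ℝ)) ^ (1/β) :=
      Real.rpow_le_rpow (Real.rpow_nonneg hp0 _) hpβ.le (by positivity)
    have h3 : ((1/4:ℝ)) ^ (1/β) ≤ (1/4:ℝ) ^ (w:ℝ) :=
      Real.rpow_le_rpow_of_exponent_ge (by norm_num) (by norm_num) h1β
    linarith [h1 ▸ h2]
  have hpw : p ^ ((1:ℝ)/w) ≤ p ^ β :=
    Real.rpow_le_rpow_of_exponent_ge h0 hp1 hβ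
  have hsplit : p = p ^ (1 - (1:ℝ)/w) * p ^ ((1:ℝ)/w) := by
    rw [← Real.rpow_add h0]
    norm_num
  have hbound : p ^ (1 - (1:ℝ)/w) ≤ (1/4:ℝ) ^ ((w:ℝ) - 1) := by
    have h5 : p ^ (1 - (1:ℝ)/w) ≤ ((1/4:ℝ) ^ (w:ℝ)) ^ (1 - (1:ℝ)/w) := by
      apply Real.rpow_le_rpow hp0 hp14
      have : (1:ℝ)/w ≤ 1 := by
        rw [div_le_one hw0]; exact_mod_cast hw
      linarith
    rwa [← Real.rpow_mul (by norm_num),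
      show (w:ℝ) * (1 - 1/w) = (w:ℝ) - 1 by field_simp] at h5
  have h4w : (w:ℝ) ≤ (4:ℝ) ^ (w:ℝ) := by
    rw [Real.rpow_natCast]
    exact_mod_cast (Nat.lt_pow_self (by norm_num : 1 < 4) : w < 4 ^ w).le
  have hpow : (0:ℝ) < (4:ℝ) ^ (w:ℝ) := Real.rpow_pos_of_pos (by norm_num) _
  have hw4 : (w:ℝ) * (1/4:ℝ) ^ ((w:ℝ) - 1) ≤ 4 := by
    have heq : (1/4:ℝ) ^ ((w:ℝ)-1) = 4 / (4:ℝ)^(w:ℝ) := by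
      rw [one_div, ← Real.rpow_neg_one (4:ℝ), ← Real.rpow_mul (by norm_num),
        show (-1:ℝ) * ((w:ℝ)-1) = 1 - (w:ℝ) by ring,
        Real.rpow_sub (by norm_num), Real.rpow_one]
    rw [heq, show (w:ℝ) * (4 / (4:ℝ)^(w:ℝ)) = ((w:ℝ)*4) / (4:ℝ)^(w:ℝ) by ring,
      div_le_iff₀ hpow]
    nlinarith
  have hpos : (0:ℝ) ≤ p ^ ((1:ℝ)/w) := Real.rpow_nonneg hp0 _
  calc (w:ℝ) * p = ((w:ℝ) * p ^ (1 - (1:ℝ)/w)) * p ^ ((1:ℝ)/w) := by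
        conv_lhs => rw [hsplit]
        ring
    _ ≤ 4 * p ^ ((1:ℝ)/w) := by
        apply mul_le_mul_of_nonneg_right _ hpos
        calc (w:ℝ) * p ^ (1 - (1:ℝ)/w) ≤ (w:ℝ) * (1/4:ℝ) ^ ((w:ℝ) - 1) :=
              mul_le_mul_of_nonneg_left hbound hw0.le
          _ ≤ 4 := hw4
    _ ≤ 4 * p ^ β := by linarith

lemma aux_key {Ω : Type*} [MeasurableSpace Ω] (μ : Measure Ω)
    (n₁ n₂ w : ℕ)
    (A : Matrix (Fin n₁) (Fin n₂) (ZMod 2))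
    (hrow : ∀ i : Fin n₁, (∃ j, A i j ≠ 0) →
      (Finset.univ.filter (fun j => A i j ≠ 0)).card = w)
    (hcol : ∀ j : Fin n₂, (Finset.univ.filter (fun i => A i j ≠ 0)).card ≤ 1)
    (e : Ω → Fin n₂ → ZMod 2) (p : ℝ) (hp0 : 0 ≤ p)
    (he : LocalStochastic μ (fun ω => Finset.univ.filter (fun j => e ω j ≠ 0)) p)
    (F : Finset (Fin n₁)) :
    μ {ω | F ⊆ Finset.univ.filter (fun i => A.mulVec (e ω) i ≠ 0)} ≤
      ENNReal.ofReal (((w:ℝ) * p) ^ F.card) := by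
  classical
  set rowsup : Fin n₁ → Finset (Fin n₂) :=
    fun i => Finset.univ.filter (fun j => A i j ≠ 0) with hrowsup
  set Φ : Finset (∀ i ∈ F, Fin n₂) := F.pi (fun i => rowsup i) with hΦ
  set T : (∀ i ∈ F, Fin n₂) → Set Ω :=
    (fun f => {ω | ∀ i (hi : i ∈ F), e ω (f i hi) ≠ 0}) with hT
  -- coverage
  have cover : {ω | F ⊆ Finset.univ.filter (fun i => A.mulVec (e ω) i ≠ 0)} ⊆
      ⋃ f ∈ Φ, T f := by
    intro ω hω
    simp only [Set.mem_setOf_eq] at hω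
    have hchoice : ∀ i ∈ F, ∃ j, A i j ≠ 0 ∧ e ω j ≠ 0 := by
      intro i hi
      have h2 := hω hi
      rw [Finset.mem_filter] at h2
      by_contra hc
      push_neg at hc
      apply h2.2
      show (Finset.univ.sum fun j => A i j * e ω j) = 0
      apply Finset.sum_eq_zero
      intro j _
      by_cases hA : A i j = 0
      · rw [hA, zero_mul]
      · rw [hc j hA, mul_zero]
    rw [Set.mem_iUnion₂]
    refine ⟨fun i hi => (hchoice i hi).choose, ?_, ?_⟩

    · rw [hΦ, Finset.mem_pi]
      intro i hi
      rw [hrowsup]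
      simp only [Finset.mem_filter, Finset.mem_univ, true_and]
      exact (hchoice i hi).choose_spec.1
    · intro i hi
      exact (hchoice i hi).choose_spec.2
  -- per-f bound
  have hf : ∀ f ∈ Φ, μ (T f) ≤ ENNReal.ofReal (p ^ F.card) := by
    intro f hfΦ
    rw [hΦ, Finset.mem_pi] at hfΦ
    set G : Finset (Fin n₂) := F.attach.image (fun x => f x.1 x.2) with hG
    have hinj : ∀ x ∈ F.attach, ∀ y ∈ F.attach,
        f x.1 x.2 = f y.1 y.2 → x = y := by
      intro x _ y _ hxy
      by_contra hne
      have hx1 : x.1 ≠ y.1 := fun h => hne (Subtype.ext h)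
      have hAx : A x.1 (f x.1 x.2) ≠ 0 := by
        have := hfΦ x.1 x.2
        rw [hrowsup] at this
        simpa using this
      have hAy : A y.1 (f y.1 y.2) ≠ 0 := by
        have := hfΦ y.1 y.2
        rw [hrowsup] at this
        simpa using this
      rw [hxy] at hAx
      have hsub : ({x.1, y.1} : Finset (Fin n₁)) ⊆
          Finset.univ.filter (fun i => A i (f y.1 y.2) ≠ 0) := by
        intro i hi
        simp only [Finset.mem_insert, Finset.mem_singleton] at hi
        rcases hi with rfl | rfl <;> simp [hAx, hAy]
      have h2le := Finset.card_le_card hsub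
      rw [Finset.card_insert_of_notMem (by simp [hx1]), Finset.card_singleton] at h2le
      have := hcol (f y.1 y.2)
      omega
    have hGcard : G.card = F.card := by
      rw [hG, Finset.card_image_of_injOn hinj, Finset.card_attach]
    have hsub : T f ⊆
        {ω | G ⊆ Finset.univ.filter (fun j => e ω j ≠ 0)} := by
      intro ω hω
      rw [hT] at hω
      simp only [Set.mem_setOf_eq] at hω ⊢
      intro j hj
      rw [hG, Finset.mem_image] at hj
      obtain ⟨x, _, rfl⟩ := hj
      simp only [Finset.mem_filter, Finset.mem_univ, true_and]
      exact hω x.1 x.2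
    calc μ _ ≤ μ {ω | G ⊆ Finset.univ.filter (fun j => e ω j ≠ 0)} :=
          measure_mono hsub
      _ ≤ ENNReal.ofReal (p ^ G.card) := he G
      _ = ENNReal.ofReal (p ^ F.card) := by rw [hGcard]
  -- count
  have hΦcard : Φ.card ≤ w ^ F.card := by
    rw [hΦ, Finset.card_pi]
    apply Finset.prod_le_pow_card
    intro i _
    by_cases hz : ∃ j, A i j ≠ 0
    · exact (hrow i hz).le
    · push_neg at hz
      rw [hrowsup]
      simp [hz]
  calc μ {ω | F ⊆ Finset.univ.filter (fun i => A.mulVec (e ω) i ≠ 0)}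
      ≤ μ (⋃ f ∈ Φ, T f) := measure_mono cover
    _ ≤ ∑ f ∈ Φ, μ (T f) := measure_biUnion_finset_le Φ _
    _ ≤ ∑ _f ∈ Φ, ENNReal.ofReal (p ^ F.card) := Finset.sum_le_sum hf
    _ = (Φ.card : ℝ≥0∞) * ENNReal.ofReal (p ^ F.card) := by
        rw [Finset.sum_const, nsmul_eq_mul]
    _ ≤ ((w ^ F.card : ℕ) : ℝ≥0∞) * ENNReal.ofReal (p ^ F.card) := by
        exact mul_le_mul_left (by exact_mod_cast hΦcard) _
    _ = ENNReal.ofReal (((w:ℝ) * p) ^ F.card) := by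
        rw [← ENNReal.ofReal_natCast, ← ENNReal.ofReal_mul (by positivity),
          mul_pow]
        push_cast
        ring_nf

lemma aux_wrap {Ω α : Type*} [MeasurableSpace Ω] (μ : Measure Ω) [IsProbabilityMeasure μ]
    (S : Ω → Finset α) (w : ℕ) (hw : 1 ≤ w) (p β : ℝ) (hp0 : 0 ≤ p) (hp1 : p ≤ 1)
    (hβ0 : 0 < β) (hβ : β ≤ 1 / w)
    (key : ∀ F : Finset α, μ {ω | F ⊆ S ω} ≤ ENNReal.ofReal (((w:ℝ) * p) ^ F.card)) :
    LocalStochastic μ S (4 * p ^ β) := by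
  intro F
  rcases le_or_gt 1 (4 * p ^ β) with h | h
  · calc μ {ω | F ⊆ S ω} ≤ 1 := prob_le_one
      _ ≤ ENNReal.ofReal ((4 * p ^ β) ^ F.card) := by
          rw [← ENNReal.ofReal_one]
          exact ENNReal.ofReal_le_ofReal (one_le_pow₀ h)
  · refine (key F).trans (ENNReal.ofReal_le_ofReal ?_)
    exact pow_le_pow_left₀ (by positivity) (aux_ineq w hw p β hp0 hp1 hβ0 hβ h) _

/-- let `A ∈ F₂^{n₁×n₂}` with `n₁·w ≤ n₂`, all non-zero rows of
Hamming weight exactly `w` and all columns of Hamming weight at most `1`.  If the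
support of the random vector `e ∈ F₂^{n₂}` is local stochastic of parameter `p`,
then the support of `Ae` is local stochastic of parameter
`4·p^{2^{−⌈log₂ w⌉}}`, and of parameter `4·p^{1/w}`. -/
theorem stmt14 {Ω : Type*} [MeasurableSpace Ω] (μ : Measure Ω) [IsProbabilityMeasure μ]
    (n₁ n₂ w : ℕ) (hw : 1 ≤ w) (hn : n₁ * w ≤ n₂)
    (A : Matrix (Fin n₁) (Fin n₂) (ZMod 2))
    (hrow : ∀ i : Fin n₁, (∃ j, A i j ≠ 0) →
      (Finset.univ.filter (fun j => A i j ≠ 0)).card = w)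
    (hcol : ∀ j : Fin n₂, (Finset.univ.filter (fun i => A i j ≠ 0)).card ≤ 1)
    (e : Ω → Fin n₂ → ZMod 2) (p : ℝ) (hp0 : 0 ≤ p) (hp1 : p ≤ 1)
    (he : LocalStochastic μ (fun ω => Finset.univ.filter (fun j => e ω j ≠ 0)) p) :
    LocalStochastic μ
      (fun ω => Finset.univ.filter (fun i => A.mulVec (e ω) i ≠ 0))
      (4 * p ^ ((2 : ℝ) ^ (-(Nat.clog 2 w : ℝ)))) ∧
    LocalStochastic μ
      (fun ω => Finset.univ.filter (fun i => A.mulVec (e ω) i ≠ 0))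
      (4 * p ^ ((1 : ℝ) / (w : ℝ))) := by
  have key := aux_key μ n₁ n₂ w A hrow hcol e p hp0 he
  have hw0 : (0:ℝ) < w := by exact_mod_cast hw
  constructor
  · apply aux_wrap μ _ w hw p _ hp0 hp1 _ _ key
    · exact Real.rpow_pos_of_pos (by norm_num) _
    · rw [Real.rpow_neg (by norm_num), Real.rpow_natCast, one_div]
      apply inv_anti₀ hw0
      exact_mod_cast Nat.le_pow_clog one_lt_two w
  · apply aux_wrap μ _ w hw p _ hp0 hp1 _ le_rfl key
    positivity
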